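/- Under the two-groups model with zero assumptions A3 and A4 and a unique null median μ₀: (i) F(μ₀) = G(μ₀) = π₀/2; (ii) F(t) > G(t) for every t > μ₀; (iii) F(t) < G(t) for every t < μ₀. Consequently, μ₀ is the unique solution of the equation F(t) = G(t). -/
import Mathlib


/-- Under the two-groups model `F = π₀F₀ + π₁F₁`,
`G = π₀G₀ + π₁G₁` with `G₀ = 1 - F₀`, zero assumptions A3 (`F₁(t) = 0` for
`t ≤ μ₀`) and A4 (`G₁(t) = 0` for `t ≥ μ₀`), and a unique null median `μ₀`:
(i) `F(μ₀) = G(μ₀) = π₀/2`; (ii) `F(t) > G(t)` for all `t > μ₀`;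
(iii) `F(t) < G(t)` for all `t < μ₀`; hence `μ₀` is the unique solution of
`F(t) = G(t)`. -/
theorem two_groups_median_crossing
    (π₀ : ℝ) (hπ₀pos : 0 < π₀) (hπ₀le : π₀ ≤ 1)
    (F₀ F₁ G₁ : ℝ → ℝ) (μ₀ : ℝ)
    (hF₀mono : Monotone F₀) (hF₀range : ∀ t, 0 ≤ F₀ t ∧ F₀ t ≤ 1)
    (hF₁mono : Monotone F₁) (hF₁range : ∀ t, 0 ≤ F₁ t ∧ F₁ t ≤ 1)
    (hG₁anti : Antitone G₁) (hG₁range : ∀ t, 0 ≤ G₁ t ∧ G₁ t ≤ 1)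
    (hmed : F₀ μ₀ = 1 / 2)
    (hmed_above : ∀ t, μ₀ < t → 1 / 2 < F₀ t)
    (hmed_below : ∀ t, t < μ₀ → F₀ t < 1 / 2)
    (hA3 : ∀ t, t ≤ μ₀ → F₁ t = 0)
    (hA4 : ∀ t, μ₀ ≤ t → G₁ t = 0)
    (F G : ℝ → ℝ)
    (hF : ∀ t, F t = π₀ * F₀ t + (1 - π₀) * F₁ t)
    (hG : ∀ t, G t = π₀ * (1 - F₀ t) + (1 - π₀) * G₁ t) :
    F μ₀ = π₀ / 2 ∧ G μ₀ = π₀ / 2 ∧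
      (∀ t, μ₀ < t → G t < F t) ∧
      (∀ t, t < μ₀ → F t < G t) ∧
      (∀ t, F t = G t → t = μ₀) := by
  have hFμ : F μ₀ = π₀ / 2 := by
    rw [hF, hmed, hA3 μ₀ le_rfl]; ring
  have hGμ : G μ₀ = π₀ / 2 := by
    rw [hG, hmed, hA4 μ₀ le_rfl]; ring
  have habove : ∀ t, μ₀ < t → G t < F t := by
    intro t ht
    have h1 := hmed_above t ht
    have h2 := (hF₁range t).1
    rw [hF t, hG t, hA4 t ht.le]
    nlinarith
  have hbelow : ∀ t, t < μ₀ → F t < G t := by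
    intro t ht
    have h1 := hmed_below t ht
    have h2 := (hG₁range t).1
    rw [hF t, hG t, hA3 t ht.le]
    nlinarith
  refine ⟨hFμ, hGμ, habove, hbelow, ?_⟩
  intro t heq
  rcases lt_trichotomy t μ₀ with h | h | h
  · exact absurd heq (hbelow t h).ne
  · exact h
  · exact absurd heq (habove t h).ne'
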